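/- Let u ∈ Γ = {u : ∀ k, ū ≤ S^k u ≤ u} and suppose there exists a sequence v such that for all k ≥ 0, 0v ≤ S^k u ≤ 1v, where 1v = sup_k S^k u and 0v = inf_k S^k u. Then u begins with 11, i.e., u_0 = u_1 = 1, unless u = (10)^∞. -/
import Mathlib


/-- The shift map: `(shift k u) n = u (n + k)`. -/
def shift (k : ℕ) (u : ℕ → Fin 2) : ℕ → Fin 2 := fun n => u (n + k)

/-- Bitwise complement of a binary sequence. -/
def complSeq (u : ℕ → Fin 2) : ℕ → Fin 2 := fun n => 1 - u n

/-- Prepend a digit to a binary sequence. -/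
def cons (b : Fin 2) (u : ℕ → Fin 2) : ℕ → Fin 2 := fun n => Nat.casesOn n b u

/-- The set Γ of binary sequences with ū ≤ Sᵏu ≤ u (lexicographically) for all k. -/
def Gamma : Set (ℕ → Fin 2) :=
  {u | ∀ k : ℕ, toLex (complSeq u) ≤ toLex (shift k u) ∧ toLex (shift k u) ≤ toLex u}

/-- The set Ξ of binary sequences with 0u ≤ Sᵏu ≤ 1u (lexicographically) for all k. -/
def Xi : Set (ℕ → Fin 2) :=
  {u | ∀ k : ℕ, toLex (cons 0 u) ≤ toLex (shift k u) ∧ toLex (shift k u) ≤ toLex (cons 1 u)}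

/-- The periodic sequence `(1^j 0)^∞`. -/
def perSeq (j : ℕ) : ℕ → Fin 2 := fun n => if n % (j + 1) < j then 1 else 0

lemma fin2' (x : Fin 2) : x = 0 ∨ x = 1 := by omega

theorem stmt14 (u : ℕ → Fin 2) (hu : u ∈ Gamma)
    (v : ℕ → Fin 2)
    (hbound : ∀ k : ℕ, toLex (cons 0 v) ≤ toLex (shift k u) ∧
      toLex (shift k u) ≤ toLex (cons 1 v))
    (hsup : IsLUB {x : Lex (ℕ → Fin 2) | ∃ k : ℕ, x = toLex (shift k u)} (toLex (cons 1 v)))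
    (hinf : IsGLB {x : Lex (ℕ → Fin 2) | ∃ k : ℕ, x = toLex (shift k u)} (toLex (cons 0 v)))
    (hne : u ≠ fun n => if n % 2 = 0 then 1 else 0) :
    u 0 = 1 ∧ u 1 = 1 := by
  have h0 : u 0 = 1 := by
    rcases fin2' (u 0) with h | h
    · exfalso
      have := (hu 0).1
      have hlt : toLex (shift 0 u) < toLex (complSeq u) :=
        ⟨0, fun j hj => absurd hj (Nat.not_lt_zero j), by
          show u (0+0) < 1 - u 0; rw [h]; decide⟩
      exact absurd this (not_le_of_gt hlt)
    · exact h
  refine ⟨h0, ?_⟩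
  rcases fin2' (u 1) with h1 | h1
  · exfalso
    apply hne
    have key : ∀ k, u (2*k) = 1 ∧ u (2*k+1) = 0 := by
      intro k
      induction k with
      | zero => exact ⟨h0, h1⟩
      | succ k ih =>
        have he : u (2*(k+1)) = 1 := by
          rcases fin2' (u (2*(k+1))) with h | h
          · exfalso
            have hle := (hu (2*k+1)).1
            have hlt : toLex (shift (2*k+1) u) < toLex (complSeq u) := by
              refine ⟨1, fun j hj => ?_, ?_⟩
              · interval_cases j
                show u (0 + (2*k+1)) = 1 - u 0
                rw [h0, Nat.zero_add, ih.2]; rfl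
              · show u (1 + (2*k+1)) < 1 - u 1
                rw [h1]
                have : 1 + (2*k+1) = 2*(k+1) := by ring
                rw [this, h]; decide
            exact absurd hle (not_le_of_gt hlt)
          · exact h
        refine ⟨he, ?_⟩
        rcases fin2' (u (2*(k+1)+1)) with h | h
        · exact h
        · exfalso
          have hle := (hu (2*(k+1))).2
          have hlt : toLex u < toLex (shift (2*(k+1)) u) := by
            refine ⟨1, fun j hj => ?_, ?_⟩
            · interval_cases j
              show u 0 = u (0 + 2*(k+1))
              rw [h0, Nat.zero_add, he]
            · show u 1 < u (1 + 2*(k+1))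
              have : 1 + 2*(k+1) = 2*(k+1)+1 := by ring
              rw [this, h, h1]; decide
          exact absurd hle (not_le_of_gt hlt)
    funext n
    rcases Nat.even_or_odd n with ⟨m, hm⟩ | ⟨m, hm⟩
    · have := (key m).1
      simp only [hm]
      rw [show m + m = 2*m by ring, this]
      simp [Nat.mul_mod_right]
    · have := (key m).2
      simp only [hm, this]
      have : (2*m+1) % 2 = 1 := by omega
      simp [this]
  · exact h1
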